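/- Let n ≥ 3, k > 0, ξ ∈ ℝⁿ and R > 0. Then there exist θ₁, θ₂ ∈ ℂⁿ with θ₁ · θ₁ = 1, θ₂ · θ₂ = 1, k(θ₁ + θ₂) = ξ, and |θ₁| ≥ R, where |θ₁| denotes the Euclidean norm of θ₁ in ℂⁿ. -/

import Mathlib

open RealInnerProductSpace

private lemma complex_sq_sum_aux {n : ℕ} (a b : Fin n → ℝ)
    (ha : ∑ i, a i * a i - ∑ i, b i * b i = 1) (hab : ∑ i, a i * b i = 0) :
    ∑ i, (((a i : ℂ) + Complex.I * (b i : ℂ)) * ((a i : ℂ) + Complex.I * (b i : ℂ))) = 1 := by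
  have step : ∀ i : Fin n, ((a i : ℂ) + Complex.I * (b i : ℂ)) * ((a i : ℂ) + Complex.I * (b i : ℂ))
      = ((a i * a i - b i * b i : ℝ) : ℂ) + Complex.I * ((2 * (a i * b i) : ℝ) : ℂ) := by
    intro i
    push_cast
    linear_combination ((b i : ℂ))^2 * Complex.I_sq
  rw [Finset.sum_congr rfl (fun i _ => step i), Finset.sum_add_distrib, ← Finset.mul_sum]
  have h1 : ∑ i, ((a i * a i - b i * b i : ℝ) : ℂ) = ((1 : ℝ) : ℂ) := by
    rw [← Complex.ofReal_sum, ← ha, Finset.sum_sub_distrib]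
  have h2 : ∑ i, ((2 * (a i * b i) : ℝ) : ℂ) = 0 := by
    rw [← Complex.ofReal_sum, ← Finset.mul_sum, hab]
    simp
  rw [h1, h2]
  simp

/-- for `n ≥ 3`, any `ξ ∈ ℝⁿ` can be written as `k(θ₁ + θ₂)` with
`θ₁, θ₂` on the complex unit variety `M = {θ ∈ ℂⁿ : θ·θ = 1}` and `|θ₁|`
arbitrarily large. -/
theorem complex_unit_variety_decomposition
    (n : ℕ) (hn : 3 ≤ n) (k : ℝ) (hk : 0 < k)
    (ξ : EuclideanSpace ℝ (Fin n)) (R : ℝ) (hR : 0 < R) :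
    ∃ θ₁ θ₂ : EuclideanSpace ℂ (Fin n),
      (∑ i, θ₁ i * θ₁ i) = 1 ∧
      (∑ i, θ₂ i * θ₂ i) = 1 ∧
      (∀ i, (k : ℂ) * (θ₁ i + θ₂ i) = (ξ i : ℂ)) ∧
      R ≤ ‖θ₁‖ := by
  classical
  have hk' : (k : ℝ) ≠ 0 := ne_of_gt hk
  set K : Submodule ℝ (EuclideanSpace ℝ (Fin n)) := (ℝ ∙ ξ)ᗮ with hK
  have hdim : 2 ≤ Module.finrank ℝ K := by
    have h1 : Module.finrank ℝ (ℝ ∙ ξ) + Module.finrank ℝ K = n := by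
      rw [hK, Submodule.finrank_add_finrank_orthogonal]
      simp
    have h2 : Module.finrank ℝ (ℝ ∙ ξ) ≤ 1 :=
      (finrank_span_le_card ({ξ} : Set (EuclideanSpace ℝ (Fin n)))).trans (by simp)
    omega
  set bK := stdOrthonormalBasis ℝ K with hbK
  set e₂ : EuclideanSpace ℝ (Fin n) := ((bK ⟨0, by omega⟩ : K) : EuclideanSpace ℝ (Fin n)) with he₂
  set e₃ : EuclideanSpace ℝ (Fin n) := ((bK ⟨1, by omega⟩ : K) : EuclideanSpace ℝ (Fin n)) with he₃
  have hmem₂ : e₂ ∈ K := (bK ⟨0, by omega⟩ : K).2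
  have hmem₃ : e₃ ∈ K := (bK ⟨1, by omega⟩ : K).2
  have inner_eq : ∀ x y : EuclideanSpace ℝ (Fin n), ⟪x, y⟫ = ∑ i, x i * y i := by
    intro x y; simp [PiLp.inner_apply, RCLike.inner_apply]; exact Finset.sum_congr rfl fun i _ => mul_comm _ _
  have hξspan : ξ ∈ (ℝ ∙ ξ) := Submodule.mem_span_singleton_self ξ
  have hξ₂ : ∑ i, ξ i * e₂ i = 0 := by
    rw [← inner_eq]
    exact (Submodule.mem_orthogonal _ _).mp hmem₂ ξ hξspan
  have hξ₃ : ∑ i, ξ i * e₃ i = 0 := by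
    rw [← inner_eq]
    exact (Submodule.mem_orthogonal _ _).mp hmem₃ ξ hξspan
  have h22 : ∑ i, e₂ i * e₂ i = 1 := by
    rw [← inner_eq, real_inner_self_eq_norm_sq]
    have h : ‖e₂‖ = 1 := bK.orthonormal.1 ⟨0, by omega⟩
    rw [h]; norm_num
  have h33 : ∑ i, e₃ i * e₃ i = 1 := by
    rw [← inner_eq, real_inner_self_eq_norm_sq]
    have h : ‖e₃‖ = 1 := bK.orthonormal.1 ⟨1, by omega⟩
    rw [h]; norm_num
  have h23 : ∑ i, e₂ i * e₃ i = 0 := by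
    rw [← inner_eq]
    exact bK.orthonormal.2 (i := ⟨0, by omega⟩) (j := ⟨1, by omega⟩) (by simp)
  have hnormξ : ‖ξ‖^2 = ∑ i, ξ i * ξ i := by
    rw [← real_inner_self_eq_norm_sq, inner_eq]
  -- parameters
  set β : ℝ := max R (‖ξ‖ / (2 * k)) with hβ
  have hβR : R ≤ β := le_max_left _ _
  have hβξ : ‖ξ‖ / (2 * k) ≤ β := le_max_right _ _
  have hβpos : 0 < β := lt_of_lt_of_le hR hβR
  have hξnonneg : 0 ≤ ‖ξ‖ / (2 * k) := div_nonneg (norm_nonneg _) (by positivity)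
  have hαkey : 0 ≤ 1 - ‖ξ‖^2 / (4 * k^2) + β^2 := by
    have h3 : ‖ξ‖^2 / (4 * k^2) = (‖ξ‖ / (2*k))^2 := by
      rw [div_pow]; congr 1; ring
    nlinarith [sq_nonneg β, mul_self_le_mul_self hξnonneg hβξ]
  set α : ℝ := Real.sqrt (1 - ‖ξ‖^2 / (4 * k^2) + β^2) with hα
  have hαsq : α^2 = 1 - ‖ξ‖^2 / (4 * k^2) + β^2 := Real.sq_sqrt hαkey
  -- real component functions
  set a : Fin n → ℝ := fun i => ξ i / (2 * k) + α * e₂ i with ha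
  set b : Fin n → ℝ := fun i => β * e₃ i with hb
  -- the two sums
  have hsum_aa : ∑ i, a i * a i = ‖ξ‖^2 / (4 * k^2) + α^2 := by
    have expand : ∀ i : Fin n, a i * a i
        = (1 / (4 * k^2)) * (ξ i * ξ i) + α^2 * (e₂ i * e₂ i) + (α / k) * (ξ i * e₂ i) := by
      intro i; rw [ha]; field_simp; all_goals ring
    rw [Finset.sum_congr rfl (fun i _ => expand i)]
    rw [Finset.sum_add_distrib, Finset.sum_add_distrib, ← Finset.mul_sum, ← Finset.mul_sum,
      ← Finset.mul_sum, hξ₂, h22, ← hnormξ]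
    field_simp
    all_goals ring
  have hsum_bb : ∑ i, b i * b i = β^2 := by
    have expand : ∀ i : Fin n, b i * b i = β^2 * (e₃ i * e₃ i) := by
      intro i; rw [hb]; ring
    rw [Finset.sum_congr rfl (fun i _ => expand i), ← Finset.mul_sum, h33, mul_one]
  have hsum_ab : ∑ i, a i * b i = 0 := by
    have expand : ∀ i : Fin n, a i * b i
        = (β / (2 * k)) * (ξ i * e₃ i) + (α * β) * (e₂ i * e₃ i) := by
      intro i; rw [ha, hb]; field_simp; all_goals ring
    rw [Finset.sum_congr rfl (fun i _ => expand i), Finset.sum_add_distrib,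
      ← Finset.mul_sum, ← Finset.mul_sum, hξ₃, h23]
    ring
  have hsum_main : ∑ i, a i * a i - ∑ i, b i * b i = 1 := by
    rw [hsum_aa, hsum_bb, hαsq]; ring
  -- define θ₁ θ₂
  set θ₁ : EuclideanSpace ℂ (Fin n) := WithLp.toLp 2 (fun i => (a i : ℂ) + Complex.I * (b i : ℂ)) with hθ₁
  set θ₂ : EuclideanSpace ℂ (Fin n) :=
    WithLp.toLp 2 (fun i => ((ξ i / (2*k) - α * e₂ i : ℝ) : ℂ) + Complex.I * ((-(β * e₃ i) : ℝ) : ℂ)) with hθ₂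
  refine ⟨θ₁, θ₂, ?_, ?_, ?_, ?_⟩
  · exact complex_sq_sum_aux a b hsum_main hsum_ab
  · refine complex_sq_sum_aux (fun i => ξ i / (2*k) - α * e₂ i) (fun i => -(β * e₃ i)) ?_ ?_
    · have e1 : ∑ i, (ξ i / (2*k) - α * e₂ i) * (ξ i / (2*k) - α * e₂ i)
          = ‖ξ‖^2 / (4 * k^2) + α^2 := by
        have expand : ∀ i : Fin n, (ξ i / (2*k) - α * e₂ i) * (ξ i / (2*k) - α * e₂ i)
            = (1 / (4 * k^2)) * (ξ i * ξ i) + α^2 * (e₂ i * e₂ i) - (α / k) * (ξ i * e₂ i) := by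
          intro i; field_simp; all_goals ring
        rw [Finset.sum_congr rfl (fun i _ => expand i)]
        rw [Finset.sum_sub_distrib, Finset.sum_add_distrib, ← Finset.mul_sum, ← Finset.mul_sum,
          ← Finset.mul_sum, hξ₂, h22, ← hnormξ]
        field_simp
        all_goals ring
      have e2 : ∑ i, -(β * e₃ i) * -(β * e₃ i) = β^2 := by
        have expand : ∀ i : Fin n, -(β * e₃ i) * -(β * e₃ i) = β^2 * (e₃ i * e₃ i) := by
          intro i; ring
        rw [Finset.sum_congr rfl (fun i _ => expand i), ← Finset.mul_sum, h33, mul_one]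
      rw [e1, e2, hαsq]; ring
    · have expand : ∀ i : Fin n, (ξ i / (2*k) - α * e₂ i) * -(β * e₃ i)
          = -((β / (2 * k)) * (ξ i * e₃ i)) + (α * β) * (e₂ i * e₃ i) := by
        intro i; field_simp; all_goals ring
      rw [Finset.sum_congr rfl (fun i _ => expand i), Finset.sum_add_distrib, Finset.sum_neg_distrib,
        ← Finset.mul_sum, ← Finset.mul_sum, hξ₃, h23]
      ring
  · intro i
    have hkc : (k : ℂ) ≠ 0 := by exact_mod_cast hk'
    simp only [hθ₁, hθ₂, ha, hb, PiLp.toLp_apply]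
    push_cast
    field_simp
    all_goals ring
  · -- norm bound
    rw [EuclideanSpace.norm_eq θ₁]
    have hterm : ∀ i : Fin n, ‖θ₁ i‖^2 = a i^2 + b i^2 := by
      intro i
      rw [hθ₁]
      rw [Complex.sq_norm, Complex.normSq_apply]
      simp
      all_goals ring
    have hge : β^2 ≤ ∑ i, ‖θ₁ i‖^2 := by
      rw [Finset.sum_congr rfl (fun i _ => hterm i), Finset.sum_add_distrib]
      have hb2 : ∑ i, b i^2 = β^2 := by
        rw [← hsum_bb]
        exact Finset.sum_congr rfl fun i _ => by rw [sq]
      rw [hb2]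
      have hnn : 0 ≤ ∑ i, a i^2 := Finset.sum_nonneg fun i _ => sq_nonneg (a i)
      linarith
    calc R ≤ β := hβR
      _ = Real.sqrt (β^2) := (Real.sqrt_sq hβpos.le).symm
      _ ≤ _ := Real.sqrt_le_sqrt hge
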